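/- Define d : ℕ → ℚ as before and R(N) = S'(N)/N − (1/4)·log₂ N, where S'(N) = Σ_{k=1}^{N−1} d(k) + d(N)/2. Then R(2N) = R(N) for all N ≥ 1. -/

import Mathlib

theorem vdc_R_invariance (d : ℕ → ℚ)
    (h0 : d 0 = 0) (h1 : d 1 = 1)
    (heven : ∀ N : ℕ, d (2 * N) = d N)
    (hodd : ∀ N : ℕ, d (2 * N + 1) = (d N + d (N + 1) + 1) / 2)
    (S' : ℕ → ℚ) (hS' : ∀ N : ℕ, S' N = (∑ k ∈ Finset.Ico 1 N, d k) + d N / 2)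
    (R : ℕ → ℝ) (hR : ∀ N : ℕ, R N = (S' N : ℝ) / N - Real.logb 2 N / 4)
    (N : ℕ) (hN : 1 ≤ N) :
    R (2 * N) = R N := by
  -- key sum identity
  have key : ∀ M : ℕ, (∑ k ∈ Finset.Ico 1 (2*M), d k)
      = 2 * (∑ k ∈ Finset.Ico 1 M, d k) + d M / 2 + (M : ℚ) / 2 := by
    intro M
    induction M with
    | zero => simp [h0]
    | succ m ih =>
      rcases Nat.eq_zero_or_pos m with hm | hm
      · subst hm
        norm_num [Finset.sum_Ico_succ_top, h1]
      · have e2 : 2 * (m + 1) = (2 * m + 1) + 1 := by ring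
        rw [e2, Finset.sum_Ico_succ_top (by omega), Finset.sum_Ico_succ_top (by omega),
          show (∑ k ∈ Finset.Ico 1 (m+1), d k) = _ from Finset.sum_Ico_succ_top hm _]
        rw [ih, heven m, hodd m]
        push_cast
        ring
  have hS2 : S' (2 * N) = 2 * S' N + (N : ℚ) / 2 := by
    rw [hS' (2*N), hS' N, key N, heven N]; ring
  have hNpos : (0:ℝ) < (N:ℝ) := by exact_mod_cast hN
  have hlog : Real.logb 2 ((2*N : ℕ) : ℝ) = 1 + Real.logb 2 (N:ℝ) := by
    push_cast
    rw [Real.logb_mul (by norm_num) (ne_of_gt hNpos)]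
    norm_num [Real.logb_self_eq_one]
  rw [hR (2*N), hR N, hlog, hS2]
  push_cast
  field_simp
  ring
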